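/- Let G be a group with subgroups H and K such that H is a normal subgroup of K, K ≤ G, and both [G : H] and [G : K] are finite. Then for every γ ∈ G, the number of cosets gH ∈ G/H fixed by left multiplication by γ equals [K : H] times the number of cosets gK ∈ G/K such that g⁻¹γg ∈ H. -/

import Mathlib

/-- If `H ≤ K ≤ G`, `H` is normal in `K`, and both `H` and `K` have finite index in `G`, then
for every `γ ∈ G` the number of cosets of `G ⧸ H` fixed by left multiplication by `γ` equals
`[K : H]` times the number of cosets `gK ∈ G ⧸ K` with `g⁻¹ γ g ∈ H`. -/
theorem stmt13 {G : Type*} [Group G] (H K : Subgroup G) (hHK : H ≤ K)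
    (hnorm : (H.subgroupOf K).Normal) (hH : H.FiniteIndex) (hK : K.FiniteIndex) (γ : G) :
    Nat.card {x : G ⧸ H // γ • x = x} =
      H.relIndex K *
        Nat.card {x : G ⧸ K // ∃ g : G, (g : G ⧸ K) = x ∧ g⁻¹ * γ * g ∈ H} := by
  classical
  set P : G ⧸ K → Prop := fun x => ∃ g : G, (g : G ⧸ K) = x ∧ g⁻¹ * γ * g ∈ H with hP
  have key : ∀ g : G, (γ • (g : G ⧸ H) = g) ↔ P (g : G ⧸ K) := by
    intro g
    constructor
    · intro h
      refine ⟨g, rfl, ?_⟩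
      have h' : ((γ * g : G) : G ⧸ H) = (g : G ⧸ H) := h
      have := (QuotientGroup.eq (s := H)).mp h'
      have h2 : g⁻¹ * γ⁻¹ * g ∈ H := by
        simpa [mul_assoc, mul_inv_rev] using this
      have := inv_mem h2
      simpa [mul_assoc, mul_inv_rev] using this
    · rintro ⟨g', hg', hmem⟩
      have hk : g'⁻¹ * g ∈ K := (QuotientGroup.eq (s := K)).mp hg'
      have hconj : ((⟨g'⁻¹ * g, hk⟩ : K))⁻¹ * ⟨g'⁻¹ * γ * g', hHK hmem⟩ *
          ⟨g'⁻¹ * g, hk⟩ ∈ H.subgroupOf K := by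
        have hmem' : (⟨g'⁻¹ * γ * g', hHK hmem⟩ : K) ∈ H.subgroupOf K := by
          simpa [Subgroup.mem_subgroupOf] using hmem
        exact Subgroup.Normal.conj_mem' hnorm _ hmem' _
      rw [Subgroup.mem_subgroupOf] at hconj
      have hginv : g⁻¹ * γ * g ∈ H := by
        have : (g'⁻¹ * g)⁻¹ * (g'⁻¹ * γ * g') * (g'⁻¹ * g) ∈ H := hconj
        simpa [mul_assoc, mul_inv_rev] using this
      show ((γ * g : G) : G ⧸ H) = (g : G ⧸ H)
      rw [QuotientGroup.eq]
      have := inv_mem hginv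
      simpa [mul_assoc, mul_inv_rev] using this
  let e := Subgroup.quotientEquivProdOfLE hHK
  have he : ∀ x : G ⧸ H, (γ • x = x) ↔ P (e x).1 := by
    refine Quotient.ind' fun g => ?_
    have h1 : (e (QuotientGroup.mk g)).1 = (g : G ⧸ K) := rfl
    rw [h1]
    exact key g
  calc Nat.card {x : G ⧸ H // γ • x = x}
      = Nat.card {p : (G ⧸ K) × (K ⧸ H.subgroupOf K) // P p.1} :=
        Nat.card_congr ((Equiv.subtypeEquivRight he).trans (e.subtypeEquiv fun x => Iff.rfl))
    _ = Nat.card ({x : G ⧸ K // P x} × (K ⧸ H.subgroupOf K)) :=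
        Nat.card_congr (Equiv.prodSubtypeFstEquivSubtypeProd)
    _ = H.relIndex K * Nat.card {x : G ⧸ K // P x} := by
        rw [Nat.card_prod, mul_comm]
        rfl
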